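/- The boundary value problem u'''(t) = -e^{u(t)} - e^{u'(t)} on (0,1) with u(0)=u'(0)=u'(1)=0 has a unique monotone (nondecreasing) nonnegative solution u satisfying 0 ≤ u(t) ≤ 0.2250, 0 ≤ u'(t) ≤ 0.3375, |u''(t)| ≤ 1.350 on [0,1]. -/

import Mathlib

/-- `u` solves `u''' = -e^u - e^{u'}` on `(0,1)` with `u(0)=u'(0)=u'(1)=0`. -/
def IsSolution (u : ℝ → ℝ) : Prop :=
  ContDiff ℝ 2 u ∧
  (∀ t ∈ Set.Ioo (0:ℝ) 1,
    HasDerivAt (deriv (deriv u)) (-Real.exp (u t) - Real.exp (deriv u t)) t) ∧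
  u 0 = 0 ∧ deriv u 0 = 0 ∧ deriv u 1 = 0

/-- bounds of the example. -/
def InBounds (u : ℝ → ℝ) : Prop :=
  ∀ t ∈ Set.Icc (0:ℝ) 1,
    u t ∈ Set.Icc 0 ((0.2250 : ℝ)) ∧ deriv u t ∈ Set.Icc 0 ((0.3375 : ℝ)) ∧ |deriv (deriv u) t| ≤ (1.350 : ℝ)

namespace Ex9

open Set intervalIntegral MeasureTheory Real

noncomputable def P0 (φ : ℝ → ℝ) (t : ℝ) : ℝ := ∫ s in (0:ℝ)..t, φ s
noncomputable def P1 (φ : ℝ → ℝ) (t : ℝ) : ℝ := ∫ s in (0:ℝ)..t, s * φ s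
noncomputable def P2 (φ : ℝ → ℝ) (t : ℝ) : ℝ := ∫ s in (0:ℝ)..t, s^2 * φ s
noncomputable def cc (φ : ℝ → ℝ) : ℝ := P0 φ 1 - P1 φ 1
noncomputable def uu (φ : ℝ → ℝ) (t : ℝ) : ℝ :=
  t^2/2 * (P0 φ t - cc φ) - t * P1 φ t + P2 φ t / 2
noncomputable def vv (φ : ℝ → ℝ) (t : ℝ) : ℝ :=
  t * (P0 φ t - cc φ) - P1 φ t
noncomputable def ww (φ : ℝ → ℝ) (t : ℝ) : ℝ := P0 φ t - cc φ

variable {φ ψ : ℝ → ℝ}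


lemma hasDerivAt_P0 (hφ : Continuous φ) (t : ℝ) : HasDerivAt (P0 φ) (φ t) t :=
  integral_hasDerivAt_right (hφ.intervalIntegrable _ _)
    (hφ.stronglyMeasurableAtFilter _ _) hφ.continuousAt

lemma hasDerivAt_P1 (hφ : Continuous φ) (t : ℝ) : HasDerivAt (P1 φ) (t * φ t) t :=
  integral_hasDerivAt_right ((continuous_id.mul hφ).intervalIntegrable _ _)
    ((continuous_id.mul hφ).stronglyMeasurableAtFilter _ _) (continuous_id.mul hφ).continuousAt

lemma hasDerivAt_P2 (hφ : Continuous φ) (t : ℝ) : HasDerivAt (P2 φ) (t^2 * φ t) t :=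
  integral_hasDerivAt_right (((continuous_pow 2).mul hφ).intervalIntegrable _ _)
    (((continuous_pow 2).mul hφ).stronglyMeasurableAtFilter _ _)
    ((continuous_pow 2).mul hφ).continuousAt

lemma hasDerivAt_uu (hφ : Continuous φ) (t : ℝ) : HasDerivAt (uu φ) (vv φ t) t := by
  have h1 : HasDerivAt (fun t : ℝ => t^2/2 * (P0 φ t - cc φ))
      (t * (P0 φ t - cc φ) + t^2/2 * φ t) t := by
    have := (((hasDerivAt_pow 2 t).div_const 2).mul ((hasDerivAt_P0 hφ t).sub_const (cc φ)))
    refine this.congr_deriv ?_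
    push_cast
    ring
  have h2 : HasDerivAt (fun t : ℝ => t * P1 φ t) (P1 φ t + t * (t * φ t)) t := by
    exact ((hasDerivAt_id t).mul (hasDerivAt_P1 hφ t)).congr_deriv (by simp)
  have h3 := (hasDerivAt_P2 hφ t).div_const 2
  have := (h1.sub h2).add h3
  refine this.congr_deriv ?_
  unfold vv
  ring

lemma hasDerivAt_vv (hφ : Continuous φ) (t : ℝ) : HasDerivAt (vv φ) (ww φ t) t := by
  have h1 : HasDerivAt (fun t : ℝ => t * (P0 φ t - cc φ))
      ((P0 φ t - cc φ) + t * φ t) t := by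
    exact ((hasDerivAt_id t).mul ((hasDerivAt_P0 hφ t).sub_const (cc φ))).congr_deriv (by simp)
  have := h1.sub (hasDerivAt_P1 hφ t)
  refine this.congr_deriv ?_
  unfold ww
  ring

lemma hasDerivAt_ww (hφ : Continuous φ) (t : ℝ) : HasDerivAt (ww φ) (φ t) t := by
  exact (hasDerivAt_P0 hφ t).sub_const (cc φ)

lemma cont_uu (hφ : Continuous φ) : Continuous (uu φ) := by
  have : Differentiable ℝ (uu φ) := fun t => (hasDerivAt_uu hφ t).differentiableAt
  exact this.continuous

lemma cont_vv (hφ : Continuous φ) : Continuous (vv φ) := by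
  have : Differentiable ℝ (vv φ) := fun t => (hasDerivAt_vv hφ t).differentiableAt
  exact this.continuous

lemma cont_ww (hφ : Continuous φ) : Continuous (ww φ) := by
  have : Differentiable ℝ (ww φ) := fun t => (hasDerivAt_ww hφ t).differentiableAt
  exact this.continuous

@[simp] lemma uu_zero : uu φ 0 = 0 := by simp [uu, P1, P2, intervalIntegral.integral_same]

@[simp] lemma vv_zero : vv φ 0 = 0 := by simp [vv, P1, intervalIntegral.integral_same]

@[simp] lemma vv_one : vv φ 1 = 0 := by simp [vv, cc]


lemma integral_quad (a b c t₀ t₁ : ℝ) :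
    ∫ s in t₀..t₁, (a + b*s + c*s^2) =
      (a*t₁ + b*t₁^2/2 + c*t₁^3/3) - (a*t₀ + b*t₀^2/2 + c*t₀^3/3) := by
  have h : ∀ x : ℝ, HasDerivAt (fun s => a*s + b*s^2/2 + c*s^3/3) (a + b*x + c*x^2) x := by
    intro x
    have h1 := (hasDerivAt_id x).const_mul a
    have h2 := ((hasDerivAt_pow 2 x).const_mul b).div_const 2
    have h3 := ((hasDerivAt_pow 3 x).const_mul c).div_const 3
    have := (h1.add h2).add h3
    refine this.congr_deriv ?_
    push_cast
    ring
  rw [intervalIntegral.integral_eq_sub_of_hasDerivAt (fun x _ => h x)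
    ((Continuous.intervalIntegrable (by continuity) _ _))]

lemma expand_int (hφ : Continuous φ) (a b c t₀ t₁ : ℝ) :
    ∫ s in t₀..t₁, (a + b*s + c*s^2) * φ s =
      a * (∫ s in t₀..t₁, φ s) + b * (∫ s in t₀..t₁, s * φ s)
        + c * ∫ s in t₀..t₁, s^2 * φ s := by
  have e : EqOn (fun s => (a + b*s + c*s^2) * φ s)
      (fun s => a * φ s + (b * (s * φ s) + c * (s^2 * φ s))) (uIcc t₀ t₁) :=
    fun s _ => by ring
  have c1 : Continuous fun s : ℝ => a * φ s := continuous_const.mul hφ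
  have c2 : Continuous fun s : ℝ => b * (s * φ s) :=
    continuous_const.mul (continuous_id.mul hφ)
  have c3 : Continuous fun s : ℝ => c * (s^2 * φ s) :=
    continuous_const.mul ((continuous_pow 2).mul hφ)
  rw [integral_congr e, integral_add (c1.intervalIntegrable _ _)
      (Continuous.intervalIntegrable (u := fun s => b * (s * φ s) + c * (s^2 * φ s)) (c2.add c3) _ _),
    integral_add (c2.intervalIntegrable _ _) (c3.intervalIntegrable _ _),
    intervalIntegral.integral_const_mul, intervalIntegral.integral_const_mul,
    intervalIntegral.integral_const_mul]
  ring

lemma int_split (hφ : Continuous φ) (t : ℝ) :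
    ∫ s in t..(1:ℝ), φ s = (∫ s in (0:ℝ)..1, φ s) - ∫ s in (0:ℝ)..t, φ s := by
  rw [← integral_add_adjacent_intervals (hφ.intervalIntegrable 0 t) (hφ.intervalIntegrable t 1)]
  ring

lemma repr_uu (hφ : Continuous φ) (t : ℝ) :
    uu φ t = (∫ s in (0:ℝ)..t, ((t^2/2 - t)*s + s^2/2) * φ s)
      - t^2/2 * ∫ s in t..(1:ℝ), (1-s) * φ s := by
  have e1 : ∫ s in (0:ℝ)..t, ((t^2/2 - t)*s + s^2/2) * φ s
      = (t^2/2 - t) * P1 φ t + (1/2) * P2 φ t := by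
    have := expand_int hφ 0 (t^2/2 - t) (1/2) 0 t
    simp only [zero_add, zero_mul] at this ⊢
    rw [integral_congr (g := fun s => ((t^2/2 - t)*s + (1/2)*s^2) * φ s) (fun s _ => by ring),
      this]
    rfl
  have e2 : ∫ s in t..(1:ℝ), (1-s) * φ s
      = ((P0 φ 1 - P0 φ t) - (P1 φ 1 - P1 φ t)) := by
    have h1 := int_split hφ t
    have hsφ : Continuous fun s : ℝ => s * φ s := continuous_id.mul hφ
    have h2 := int_split hsφ t
    have := expand_int hφ 1 (-1) 0 t 1
    rw [integral_congr (g := fun s => (1 + (-1)*s + 0*s^2) * φ s) (fun s _ => by ring), this,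
      h1, h2]
    simp only [P0, P1]
    ring
  rw [e1, e2]
  simp only [uu, cc]
  ring

lemma repr_vv (hφ : Continuous φ) (t : ℝ) :
    vv φ t = (∫ s in (0:ℝ)..t, ((t-1)*s) * φ s)
      - t * ∫ s in t..(1:ℝ), (1-s) * φ s := by
  have e1 : ∫ s in (0:ℝ)..t, ((t-1)*s) * φ s = (t-1) * P1 φ t := by
    have := expand_int hφ 0 (t-1) 0 0 t
    rw [integral_congr (g := fun s => (0 + (t-1)*s + 0*s^2) * φ s) (fun s _ => by ring), this]
    simp only [P1]
    ring
  have e2 : ∫ s in t..(1:ℝ), (1-s) * φ s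
      = ((P0 φ 1 - P0 φ t) - (P1 φ 1 - P1 φ t)) := by
    have h1 := int_split hφ t
    have hsφ : Continuous fun s : ℝ => s * φ s := continuous_id.mul hφ
    have h2 := int_split hsφ t
    have := expand_int hφ 1 (-1) 0 t 1
    rw [integral_congr (g := fun s => (1 + (-1)*s + 0*s^2) * φ s) (fun s _ => by ring), this,
      h1, h2]
    simp only [P0, P1]
    ring
  rw [e1, e2]
  simp only [vv, cc]
  ring

lemma repr_ww (hφ : Continuous φ) (t : ℝ) :
    ww φ t = (∫ s in (0:ℝ)..t, s * φ s) + ∫ s in t..(1:ℝ), (s-1) * φ s := by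
  have e2 : ∫ s in t..(1:ℝ), (s-1) * φ s
      = ((P1 φ 1 - P1 φ t) - (P0 φ 1 - P0 φ t)) := by
    have h1 := int_split hφ t
    have hsφ : Continuous fun s : ℝ => s * φ s := continuous_id.mul hφ
    have h2 := int_split hsφ t
    have := expand_int hφ (-1) 1 0 t 1
    rw [integral_congr (g := fun s => ((-1) + 1*s + 0*s^2) * φ s) (fun s _ => by ring), this,
      h1, h2]
    simp only [P0, P1]
    ring
  rw [e2]
  simp only [ww, cc, P0, P1]
  ring

lemma abs_integral_le {f g : ℝ → ℝ} {a b : ℝ} (hab : a ≤ b) (hf : Continuous f)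
    (hg : Continuous g) (h : ∀ s ∈ Icc a b, |f s| ≤ g s) :
    |∫ s in a..b, f s| ≤ ∫ s in a..b, g s := by
  have h1 : (∫ s in a..b, f s) ≤ ∫ s in a..b, g s :=
    integral_mono_on hab (hf.intervalIntegrable _ _) (hg.intervalIntegrable _ _)
      (fun s hs => (abs_le.mp (h s hs)).2)
  have h2 : (∫ s in a..b, -g s) ≤ ∫ s in a..b, f s :=
    integral_mono_on hab (hg.neg.intervalIntegrable _ _) (hf.intervalIntegrable _ _)
      (fun s hs => (abs_le.mp (h s hs)).1)
  rw [intervalIntegral.integral_neg] at h2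
  exact abs_le.mpr ⟨by linarith, h1⟩

lemma abs_uu_le (hφ : Continuous φ) {M t : ℝ} (hM : ∀ s ∈ Icc (0:ℝ) 1, |φ s| ≤ M)
    (ht : t ∈ Icc (0:ℝ) 1) : |uu φ t| ≤ M / 12 := by
  obtain ⟨ht0, ht1⟩ := ht
  have hM0 : 0 ≤ M := le_trans (abs_nonneg _) (hM 0 ⟨le_refl _, zero_le_one⟩)
  have b1 : |∫ s in (0:ℝ)..t, ((t^2/2 - t)*s + s^2/2) * φ s| ≤ M * (t^3/3 - t^4/4) := by
    have hb : (∫ s in (0:ℝ)..t, (0 + (M*(t - t^2/2))*s + (-(M/2))*s^2)) = M * (t^3/3 - t^4/4) := by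
      rw [integral_quad]; ring
    have h := abs_integral_le ht0 ((by continuity : Continuous fun s : ℝ => ((t^2/2 - t)*s + s^2/2) * φ s))
      (by continuity : Continuous fun s : ℝ => (0 + (M*(t - t^2/2))*s + (-(M/2))*s^2))
      (fun s hs => by
        have hφs := hM s ⟨hs.1, hs.2.trans ht1⟩
        have hk : (t^2/2 - t)*s + s^2/2 ≤ 0 := by
          nlinarith [mul_nonneg hs.1 (sub_nonneg.mpr hs.2),
            mul_nonneg (mul_nonneg hs.1 ht0) (sub_nonneg.mpr ht1)]
        rw [abs_mul, abs_of_nonpos hk]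
        nlinarith [mul_nonneg (neg_nonneg.mpr hk) (sub_nonneg.mpr hφs)])
    rwa [hb] at h
  have b2 : |∫ s in t..(1:ℝ), (1-s) * φ s| ≤ M * (1-t)^2/2 := by
    have hb : (∫ s in t..(1:ℝ), (M + (-M)*s + 0*s^2)) = M * (1-t)^2/2 := by
      rw [integral_quad]; ring
    have h := abs_integral_le ht1 ((by continuity : Continuous fun s : ℝ => (1-s) * φ s))
      (by continuity : Continuous fun s : ℝ => (M + (-M)*s + 0*s^2))
      (fun s hs => by
        have hφs := hM s ⟨le_trans ht0 hs.1, hs.2⟩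
        rw [abs_mul, abs_of_nonneg (by linarith [hs.2] : (0:ℝ) ≤ 1 - s)]
        nlinarith [mul_nonneg (by linarith [hs.2] : (0:ℝ) ≤ 1 - s) (sub_nonneg.mpr hφs)])
    rwa [hb] at h
  rw [repr_uu hφ]
  have key : |(∫ s in (0:ℝ)..t, ((t^2/2 - t)*s + s^2/2) * φ s)
      - t^2/2 * ∫ s in t..(1:ℝ), (1-s) * φ s|
      ≤ M * (t^3/3 - t^4/4) + t^2/2 * (M * (1-t)^2/2) := by
    refine le_trans (abs_sub _ _) ?_
    rw [abs_mul, abs_of_nonneg (by positivity : (0:ℝ) ≤ t^2/2)]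
    have ht2 : (0:ℝ) ≤ t^2/2 := by positivity
    exact add_le_add b1 (mul_le_mul_of_nonneg_left b2 ht2)
  refine le_trans key ?_
  nlinarith [mul_nonneg hM0 (mul_nonneg (sq_nonneg (1-t)) (by linarith : (0:ℝ) ≤ 1 + 2*t))]

lemma abs_vv_le (hφ : Continuous φ) {M t : ℝ} (hM : ∀ s ∈ Icc (0:ℝ) 1, |φ s| ≤ M)
    (ht : t ∈ Icc (0:ℝ) 1) : |vv φ t| ≤ M / 8 := by
  obtain ⟨ht0, ht1⟩ := ht
  have hM0 : 0 ≤ M := le_trans (abs_nonneg _) (hM 0 ⟨le_refl _, zero_le_one⟩)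
  have b1 : |∫ s in (0:ℝ)..t, ((t-1)*s) * φ s| ≤ M * (1-t) * t^2/2 := by
    have hb : (∫ s in (0:ℝ)..t, (0 + (M*(1-t))*s + 0*s^2)) = M * (1-t) * t^2/2 := by
      rw [integral_quad]; ring
    have h := abs_integral_le ht0 ((by continuity : Continuous fun s : ℝ => ((t-1)*s) * φ s))
      (by continuity : Continuous fun s : ℝ => (0 + (M*(1-t))*s + 0*s^2))
      (fun s hs => by
        have hφs := hM s ⟨hs.1, hs.2.trans ht1⟩
        have hk : (t-1)*s ≤ 0 := mul_nonpos_of_nonpos_of_nonneg (by linarith) hs.1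
        rw [abs_mul, abs_of_nonpos hk]
        nlinarith [mul_nonneg (mul_nonneg (by linarith : (0:ℝ) ≤ 1 - t) hs.1)
          (sub_nonneg.mpr hφs)])
    rwa [hb] at h
  have b2 : |∫ s in t..(1:ℝ), (1-s) * φ s| ≤ M * (1-t)^2/2 := by
    have hb : (∫ s in t..(1:ℝ), (M + (-M)*s + 0*s^2)) = M * (1-t)^2/2 := by
      rw [integral_quad]; ring
    have h := abs_integral_le ht1 ((by continuity : Continuous fun s : ℝ => (1-s) * φ s))
      (by continuity : Continuous fun s : ℝ => (M + (-M)*s + 0*s^2))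
      (fun s hs => by
        have hφs := hM s ⟨le_trans ht0 hs.1, hs.2⟩
        rw [abs_mul, abs_of_nonneg (by linarith [hs.2] : (0:ℝ) ≤ 1 - s)]
        nlinarith [mul_nonneg (by linarith [hs.2] : (0:ℝ) ≤ 1 - s) (sub_nonneg.mpr hφs)])
    rwa [hb] at h
  rw [repr_vv hφ]
  have key : |(∫ s in (0:ℝ)..t, ((t-1)*s) * φ s) - t * ∫ s in t..(1:ℝ), (1-s) * φ s|
      ≤ M * (1-t) * t^2/2 + t * (M * (1-t)^2/2) := by
    refine le_trans (abs_sub _ _) ?_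
    rw [abs_mul, abs_of_nonneg ht0]
    exact add_le_add b1 (mul_le_mul_of_nonneg_left b2 ht0)
  refine le_trans key ?_
  nlinarith [mul_nonneg hM0 (sq_nonneg (1 - 2*t))]

lemma abs_ww_le (hφ : Continuous φ) {M t : ℝ} (hM : ∀ s ∈ Icc (0:ℝ) 1, |φ s| ≤ M)
    (ht : t ∈ Icc (0:ℝ) 1) : |ww φ t| ≤ M / 2 := by
  obtain ⟨ht0, ht1⟩ := ht
  have hM0 : 0 ≤ M := le_trans (abs_nonneg _) (hM 0 ⟨le_refl _, zero_le_one⟩)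
  have b1 : |∫ s in (0:ℝ)..t, s * φ s| ≤ M * t^2/2 := by
    have hb : (∫ s in (0:ℝ)..t, (0 + M*s + 0*s^2)) = M * t^2/2 := by
      rw [integral_quad]; ring
    have h := abs_integral_le ht0 ((by continuity : Continuous fun s : ℝ => s * φ s))
      (by continuity : Continuous fun s : ℝ => (0 + M*s + 0*s^2))
      (fun s hs => by
        have hφs := hM s ⟨hs.1, hs.2.trans ht1⟩
        rw [abs_mul, abs_of_nonneg hs.1]
        nlinarith [mul_nonneg hs.1 (sub_nonneg.mpr hφs)])
    rwa [hb] at h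
  have b2 : |∫ s in t..(1:ℝ), (s-1) * φ s| ≤ M * (1-t)^2/2 := by
    have hb : (∫ s in t..(1:ℝ), (M + (-M)*s + 0*s^2)) = M * (1-t)^2/2 := by
      rw [integral_quad]; ring
    have h := abs_integral_le ht1 ((by continuity : Continuous fun s : ℝ => (s-1) * φ s))
      (by continuity : Continuous fun s : ℝ => (M + (-M)*s + 0*s^2))
      (fun s hs => by
        have hφs := hM s ⟨le_trans ht0 hs.1, hs.2⟩
        rw [abs_mul, abs_of_nonpos (by linarith [hs.2] : s - 1 ≤ 0)]
        nlinarith [mul_nonneg (by linarith [hs.2] : (0:ℝ) ≤ 1 - s) (sub_nonneg.mpr hφs)])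
    rwa [hb] at h
  rw [repr_ww hφ]
  refine le_trans (abs_add_le _ _) (le_trans (add_le_add b1 b2) ?_)
  nlinarith [mul_nonneg hM0 (mul_nonneg ht0 (sub_nonneg.mpr ht1))]

lemma uu_nonneg (hφ : Continuous φ) {t : ℝ} (hneg : ∀ s ∈ Icc (0:ℝ) 1, φ s ≤ 0)
    (ht : t ∈ Icc (0:ℝ) 1) : 0 ≤ uu φ t := by
  obtain ⟨ht0, ht1⟩ := ht
  rw [repr_uu hφ]
  have h1 : 0 ≤ ∫ s in (0:ℝ)..t, ((t^2/2 - t)*s + s^2/2) * φ s := by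
    apply intervalIntegral.integral_nonneg ht0
    intro s hs
    have hk : (t^2/2 - t)*s + s^2/2 ≤ 0 := by
      nlinarith [mul_nonneg hs.1 (sub_nonneg.mpr hs.2),
        mul_nonneg (mul_nonneg hs.1 ht0) (sub_nonneg.mpr ht1)]
    nlinarith [mul_nonneg (neg_nonneg.mpr hk) (neg_nonneg.mpr (hneg s ⟨hs.1, hs.2.trans ht1⟩))]
  have h2 : (∫ s in t..(1:ℝ), (1-s) * φ s) ≤ 0 := by
    have hpt : ∀ s ∈ Icc t 1, (0:ℝ) ≤ -((1-s) * φ s) := by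
      intro s hs
      have h1s : (0:ℝ) ≤ 1 - s := by linarith [hs.2]
      have hφn := hneg s ⟨le_trans ht0 hs.1, hs.2⟩
      nlinarith [mul_nonneg h1s (neg_nonneg.mpr hφn)]
    have hI : (0:ℝ) ≤ ∫ s in t..(1:ℝ), -((1-s) * φ s) :=
      intervalIntegral.integral_nonneg ht1 hpt
    rw [intervalIntegral.integral_neg] at hI
    linarith
  nlinarith [mul_nonneg (by positivity : (0:ℝ) ≤ t^2/2) (neg_nonneg.mpr h2)]

lemma vv_nonneg (hφ : Continuous φ) {t : ℝ} (hneg : ∀ s ∈ Icc (0:ℝ) 1, φ s ≤ 0)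
    (ht : t ∈ Icc (0:ℝ) 1) : 0 ≤ vv φ t := by
  obtain ⟨ht0, ht1⟩ := ht
  rw [repr_vv hφ]
  have h1 : 0 ≤ ∫ s in (0:ℝ)..t, ((t-1)*s) * φ s := by
    apply intervalIntegral.integral_nonneg ht0
    intro s hs
    have hk : (t-1)*s ≤ 0 := mul_nonpos_of_nonpos_of_nonneg (by linarith) hs.1
    nlinarith [mul_nonneg (neg_nonneg.mpr hk) (neg_nonneg.mpr (hneg s ⟨hs.1, hs.2.trans ht1⟩))]
  have h2 : (∫ s in t..(1:ℝ), (1-s) * φ s) ≤ 0 := by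
    have hpt : ∀ s ∈ Icc t 1, (0:ℝ) ≤ -((1-s) * φ s) := by
      intro s hs
      have h1s : (0:ℝ) ≤ 1 - s := by linarith [hs.2]
      have hφn := hneg s ⟨le_trans ht0 hs.1, hs.2⟩
      nlinarith [mul_nonneg h1s (neg_nonneg.mpr hφn)]
    have hI : (0:ℝ) ≤ ∫ s in t..(1:ℝ), -((1-s) * φ s) :=
      intervalIntegral.integral_nonneg ht1 hpt
    rw [intervalIntegral.integral_neg] at hI
    linarith
  nlinarith [mul_nonneg ht0 (neg_nonneg.mpr h2)]

lemma P0_sub (hφ : Continuous φ) (hψ : Continuous ψ) (t : ℝ) :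
    P0 (fun s => φ s - ψ s) t = P0 φ t - P0 ψ t := by
  simp only [P0]
  exact integral_sub (hφ.intervalIntegrable _ _) (hψ.intervalIntegrable _ _)

lemma P1_sub (hφ : Continuous φ) (hψ : Continuous ψ) (t : ℝ) :
    P1 (fun s => φ s - ψ s) t = P1 φ t - P1 ψ t := by
  simp only [P1, mul_sub]
  exact integral_sub ((continuous_id.mul hφ).intervalIntegrable _ _)
    ((continuous_id.mul hψ).intervalIntegrable _ _)

lemma P2_sub (hφ : Continuous φ) (hψ : Continuous ψ) (t : ℝ) :
    P2 (fun s => φ s - ψ s) t = P2 φ t - P2 ψ t := by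
  simp only [P2, mul_sub]
  exact integral_sub (((continuous_pow 2).mul hφ).intervalIntegrable _ _)
    (((continuous_pow 2).mul hψ).intervalIntegrable _ _)

lemma uu_sub (hφ : Continuous φ) (hψ : Continuous ψ) (t : ℝ) :
    uu φ t - uu ψ t = uu (fun s => φ s - ψ s) t := by
  simp only [uu, cc, P0_sub hφ hψ, P1_sub hφ hψ, P2_sub hφ hψ]
  ring

lemma vv_sub (hφ : Continuous φ) (hψ : Continuous ψ) (t : ℝ) :
    vv φ t - vv ψ t = vv (fun s => φ s - ψ s) t := by
  simp only [vv, cc, P0_sub hφ hψ, P1_sub hφ hψ]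
  ring

lemma constOn {A : ℝ → ℝ} (hc : ContinuousOn A (Icc 0 1))
    (hd : ∀ t ∈ Ioo (0:ℝ) 1, HasDerivAt A 0 t) :
    ∀ t ∈ Icc (0:ℝ) 1, A t = A 0 := by
  have hdiff : DifferentiableOn ℝ A (interior (Icc (0:ℝ) 1)) := by
    rw [interior_Icc]
    exact fun t ht => ((hd t ht).differentiableAt).differentiableWithinAt
  have hmono : MonotoneOn A (Icc 0 1) :=
    monotoneOn_of_deriv_nonneg (convex_Icc 0 1) hc hdiff (fun t ht => by
      rw [interior_Icc] at ht
      rw [(hd t ht).deriv])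
  have hanti : AntitoneOn A (Icc 0 1) :=
    antitoneOn_of_deriv_nonpos (convex_Icc 0 1) hc hdiff (fun t ht => by
      rw [interior_Icc] at ht
      rw [(hd t ht).deriv])
  intro t ht
  have h0 : (0:ℝ) ∈ Icc (0:ℝ) 1 := ⟨le_refl _, zero_le_one⟩
  exact le_antisymm (hanti h0 ht ht.1) (hmono h0 ht ht.1)

lemma exp_le_q (x q : ℝ) (hq : 0 < q) (hx : x / 4 + 1/q ≤ 1) : exp x ≤ q^4 := by
  have h4 : exp x = (exp (x/4))^4 := by
    rw [← Real.exp_nat_mul]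
    norm_num
    ring
  rw [h4]
  have hb : exp (x/4) ≤ q := by
    have h1 := Real.add_one_le_exp (-(x/4))
    have h2 : exp (-(x/4)) = 1 / exp (x/4) := by
      rw [Real.exp_neg]
      ring
    rw [h2] at h1
    have hp := Real.exp_pos (x/4)
    rw [le_div_iff₀ hp] at h1
    have h5 : (1/q) * exp (x/4) ≤ 1 := by
      nlinarith [mul_nonneg (by linarith : (0:ℝ) ≤ 1 - x/4 - 1/q) hp.le]
    calc exp (x/4) = q * ((1/q) * exp (x/4)) := by field_simp
      _ ≤ q * 1 := mul_le_mul_of_nonneg_left h5 hq.le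
      _ = q := mul_one q
  exact pow_le_pow_left₀ (le_of_lt (Real.exp_pos (x/4))) hb 4

lemma exp_sum_le : exp (9/40 : ℝ) + exp (27/80 : ℝ) ≤ 27/10 := by
  have h1 : exp (9/40 : ℝ) ≤ (160/151)^4 := by
    apply exp_le_q _ _ (by norm_num)
    norm_num
  have h2 : exp (27/80 : ℝ) ≤ (320/293)^4 := by
    apply exp_le_q _ _ (by norm_num)
    norm_num
  nlinarith [h1, h2]

lemma exp_le_85 : exp (27/80 : ℝ) ≤ 8/5 := by
  have h1 := Real.add_one_le_exp (-(27/80 : ℝ))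
  have h2 : exp (-(27/80 : ℝ)) = 1 / exp (27/80 : ℝ) := by
    rw [Real.exp_neg]
    ring
  rw [h2] at h1
  have hp := Real.exp_pos (27/80 : ℝ)
  rw [le_div_iff₀ hp] at h1
  nlinarith

lemma abs_exp_sub_exp {a b m : ℝ} (ha : a ≤ m) (hb : b ≤ m) :
    |exp a - exp b| ≤ exp m * |a - b| := by
  wlog h : b ≤ a generalizing a b
  · rw [abs_sub_comm, abs_sub_comm a b]
    exact this hb ha (le_of_not_ge h)
  rw [abs_of_nonneg (sub_nonneg.mpr (Real.exp_le_exp.mpr h)),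
    abs_of_nonneg (sub_nonneg.mpr h)]
  have h1 := Real.add_one_le_exp (b - a)
  have h2 : exp (b - a) = exp b / exp a := Real.exp_sub b a
  rw [h2] at h1
  have hp := Real.exp_pos a
  have hm := Real.exp_le_exp.mpr ha
  rw [le_div_iff₀ hp] at h1
  nlinarith [Real.exp_pos b]

noncomputable def Ff (f : C(Icc (0:ℝ) 1, ℝ × ℝ)) : ℝ → ℝ :=
  fun s => -(exp (f (projIcc 0 1 zero_le_one s)).1 + exp (f (projIcc 0 1 zero_le_one s)).2)

lemma cont_Ff (f : C(Icc (0:ℝ) 1, ℝ × ℝ)) : Continuous (Ff f) := by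
  have h : Continuous fun s : ℝ => f (projIcc 0 1 zero_le_one s) :=
    f.continuous.comp continuous_projIcc
  exact ((Real.continuous_exp.comp (continuous_fst.comp h)).add
    (Real.continuous_exp.comp (continuous_snd.comp h))).neg

def SSet : Set C(Icc (0:ℝ) 1, ℝ × ℝ) :=
  {f | ∀ x, (f x).1 ∈ Icc (0:ℝ) (9/40) ∧ (f x).2 ∈ Icc (0:ℝ) (27/80)}

lemma isClosed_SSet : IsClosed SSet := by
  have he : SSet = ⋂ x, (fun f : C(Icc (0:ℝ) 1, ℝ × ℝ) => f x) ⁻¹'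
      ((Icc (0:ℝ) (9/40)) ×ˢ (Icc (0:ℝ) (27/80))) := by
    ext f
    rw [Set.mem_iInter]
    constructor
    · intro h x
      exact h x
    · intro h x
      exact h x
  rw [he]
  exact isClosed_iInter fun x =>
    (isClosed_Icc.prod isClosed_Icc).preimage (continuous_eval_const x)

lemma Ff_nonpos (f : C(Icc (0:ℝ) 1, ℝ × ℝ)) (s : ℝ) : Ff f s ≤ 0 := by
  have h1 := Real.exp_pos (f (projIcc 0 1 zero_le_one s)).1
  have h2 := Real.exp_pos (f (projIcc 0 1 zero_le_one s)).2
  simp only [Ff]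
  linarith

lemma abs_Ff_le {f : C(Icc (0:ℝ) 1, ℝ × ℝ)} (hf : f ∈ SSet) (s : ℝ) :
    |Ff f s| ≤ 27/10 := by
  set x := projIcc 0 1 zero_le_one s
  obtain ⟨hf1, hf2⟩ := hf x
  have h1 := Real.exp_pos (f x).1
  have h2 := Real.exp_pos (f x).2
  have e1 : exp (f x).1 ≤ exp (9/40 : ℝ) := Real.exp_le_exp.mpr hf1.2
  have e2 : exp (f x).2 ≤ exp (27/80 : ℝ) := Real.exp_le_exp.mpr hf2.2
  have := exp_sum_le
  rw [Ff, abs_of_nonpos (by linarith : -(exp (f x).1 + exp (f x).2) ≤ 0)]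
  linarith

lemma Ff_sub_le {f g : C(Icc (0:ℝ) 1, ℝ × ℝ)} (hf : f ∈ SSet) (hg : g ∈ SSet) (s : ℝ) :
    |Ff f s - Ff g s| ≤ (16/5) * dist (f (projIcc 0 1 zero_le_one s))
      (g (projIcc 0 1 zero_le_one s)) := by
  set x := projIcc 0 1 zero_le_one s
  obtain ⟨hf1, hf2⟩ := hf x
  obtain ⟨hg1, hg2⟩ := hg x
  have e1 : |exp (f x).1 - exp (g x).1| ≤ exp (27/80 : ℝ) * |(f x).1 - (g x).1| :=
    abs_exp_sub_exp (le_trans hf1.2 (by norm_num)) (le_trans hg1.2 (by norm_num))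
  have e2 : |exp (f x).2 - exp (g x).2| ≤ exp (27/80 : ℝ) * |(f x).2 - (g x).2| :=
    abs_exp_sub_exp hf2.2 hg2.2
  have hL := exp_le_85
  have hs : Ff f s - Ff g s = (exp (g x).1 - exp (f x).1) + (exp (g x).2 - exp (f x).2) := by
    simp only [Ff]
    ring
  have habs : |Ff f s - Ff g s| ≤ |exp (f x).1 - exp (g x).1| + |exp (f x).2 - exp (g x).2| := by
    rw [hs]
    refine le_trans (abs_add_le _ _) ?_
    rw [abs_sub_comm (exp (g x).1), abs_sub_comm (exp (g x).2)]
  have hd : dist (f x) (g x) = max (dist ((f x).1) ((g x).1)) (dist ((f x).2) ((g x).2)) :=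
    Prod.dist_eq
  have hd1 : |(f x).1 - (g x).1| ≤ dist (f x) (g x) := by
    rw [hd, ← Real.dist_eq]
    exact le_max_left _ _
  have hd2 : |(f x).2 - (g x).2| ≤ dist (f x) (g x) := by
    rw [hd, ← Real.dist_eq]
    exact le_max_right _ _
  have hexp0 : (0:ℝ) < exp (27/80 : ℝ) := Real.exp_pos _
  have ha1 := abs_nonneg ((f x).1 - (g x).1)
  have ha2 := abs_nonneg ((f x).2 - (g x).2)
  nlinarith [dist_nonneg (x := f x) (y := g x)]

noncomputable def Tmap (f : C(Icc (0:ℝ) 1, ℝ × ℝ)) : C(Icc (0:ℝ) 1, ℝ × ℝ) :=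
  ⟨fun x => (uu (Ff f) x, vv (Ff f) x),
    (((cont_uu (cont_Ff f)).comp continuous_subtype_val).prodMk
      ((cont_vv (cont_Ff f)).comp continuous_subtype_val))⟩

lemma Tmap_mem {f : C(Icc (0:ℝ) 1, ℝ × ℝ)} (hf : f ∈ SSet) : Tmap f ∈ SSet := by
  intro x
  have hc := cont_Ff f
  have hM : ∀ s ∈ Icc (0:ℝ) 1, |Ff f s| ≤ 27/10 := fun s _ => abs_Ff_le hf s
  have hneg : ∀ s ∈ Icc (0:ℝ) 1, Ff f s ≤ 0 := fun s _ => Ff_nonpos f s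
  refine ⟨⟨uu_nonneg hc hneg x.2, ?_⟩, ⟨vv_nonneg hc hneg x.2, ?_⟩⟩
  · show uu (Ff f) ↑x ≤ 9/40
    have := (le_abs_self _).trans (abs_uu_le hc hM x.2)
    linarith
  · show vv (Ff f) ↑x ≤ 27/80
    have := (le_abs_self _).trans (abs_vv_le hc hM x.2)
    linarith

noncomputable def TS : ↥SSet → ↥SSet := fun f => ⟨Tmap f.1, Tmap_mem f.2⟩

lemma TS_dist (f g : ↥SSet) : dist (TS f) (TS g) ≤ (2/5) * dist f g := by
  have hd0 : (0:ℝ) ≤ dist f g := dist_nonneg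
  rw [Subtype.dist_eq]
  refine (ContinuousMap.dist_le (by positivity)).mpr ?_
  intro x
  have hcf := cont_Ff f.1
  have hcg := cont_Ff g.1
  have hδc : Continuous fun s => Ff f.1 s - Ff g.1 s := hcf.sub hcg
  have hδb : ∀ s ∈ Icc (0:ℝ) 1, |Ff f.1 s - Ff g.1 s| ≤ (16/5) * dist f g := by
    intro s _
    refine le_trans (Ff_sub_le f.2 g.2 s) ?_
    have h1 : dist (f.1 (projIcc 0 1 zero_le_one s)) (g.1 (projIcc 0 1 zero_le_one s))
        ≤ dist f g := by
      rw [Subtype.dist_eq]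
      exact ContinuousMap.dist_apply_le_dist _
    nlinarith
  have hu : |uu (Ff f.1) x - uu (Ff g.1) x| ≤ ((16/5) * dist f g) / 12 := by
    rw [uu_sub hcf hcg]
    exact abs_uu_le hδc hδb x.2
  have hv : |vv (Ff f.1) x - vv (Ff g.1) x| ≤ ((16/5) * dist f g) / 8 := by
    rw [vv_sub hcf hcg]
    exact abs_vv_le hδc hδb x.2
  show dist (Tmap f.1 x) (Tmap g.1 x) ≤ (2/5) * dist f g
  rw [show Tmap f.1 x = (uu (Ff f.1) x, vv (Ff f.1) x) from rfl,
    show Tmap g.1 x = (uu (Ff g.1) x, vv (Ff g.1) x) from rfl,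
    Prod.dist_eq]
  simp only [Real.dist_eq]
  apply max_le
  · refine le_trans hu ?_
    linarith
  · refine le_trans hv ?_
    linarith

lemma contractingTS : ContractingWith (2/5 : NNReal) TS := by
  constructor
  · rw [← NNReal.coe_lt_one]
    norm_num
  · apply LipschitzWith.of_dist_le_mul
    intro f g
    have := TS_dist f g
    convert this using 2
    norm_num

end Ex9


theorem example_9 :
    ∃ u : ℝ → ℝ, (IsSolution u ∧ InBounds u ∧
      (∀ t ∈ Set.Icc (0:ℝ) 1, 0 ≤ u t) ∧ MonotoneOn u (Set.Icc (0:ℝ) 1)) ∧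
      ∀ v : ℝ → ℝ, IsSolution v ∧ InBounds v → ∀ t ∈ Set.Icc (0:ℝ) 1, v t = u t := by
  classical
  open Set Real in
  haveI hne : Nonempty ↥Ex9.SSet :=
    ⟨⟨ContinuousMap.const _ ((0:ℝ), (0:ℝ)), fun x =>
      ⟨⟨le_refl 0, by norm_num⟩, ⟨le_refl 0, by norm_num⟩⟩⟩⟩
  haveI hcs : CompleteSpace ↥Ex9.SSet := Ex9.isClosed_SSet.isComplete.completeSpace_coe
  have hC := Ex9.contractingTS
  set f : ↥Ex9.SSet := ContractingWith.fixedPoint Ex9.TS hC with hfdef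
  have hfix : Ex9.TS f = f := hC.fixedPoint_isFixedPt
  have hfeq : ∀ x : ↥(Set.Icc (0:ℝ) 1),
      f.1 x = (Ex9.uu (Ex9.Ff f.1) ↑x, Ex9.vv (Ex9.Ff f.1) ↑x) := by
    intro x
    have h := congrArg (fun h : ↥Ex9.SSet => h.1 x) hfix
    exact h.symm
  set φ := Ex9.Ff f.1 with hφdef
  have hφc : Continuous φ := Ex9.cont_Ff f.1
  set u := Ex9.uu φ with hudef
  have hd1 : ∀ t, HasDerivAt u (Ex9.vv φ t) t := Ex9.hasDerivAt_uu hφc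
  have hdu : deriv u = Ex9.vv φ := funext fun t => (hd1 t).deriv
  have hd2 : ∀ t, HasDerivAt (Ex9.vv φ) (Ex9.ww φ t) t := Ex9.hasDerivAt_vv hφc
  have hddu : deriv (deriv u) = Ex9.ww φ := by
    rw [hdu]
    exact funext fun t => (hd2 t).deriv
  have hd3 : ∀ t, HasDerivAt (Ex9.ww φ) (φ t) t := Ex9.hasDerivAt_ww hφc
  have hM : ∀ s ∈ Set.Icc (0:ℝ) 1, |φ s| ≤ 27/10 := fun s _ => Ex9.abs_Ff_le f.2 s
  have hneg : ∀ s ∈ Set.Icc (0:ℝ) 1, φ s ≤ 0 := fun s _ => Ex9.Ff_nonpos f.1 s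
  have hcd : ContDiff ℝ 2 u := by
    rw [show (2 : WithTop ℕ∞) = 1 + 1 from rfl, contDiff_succ_iff_deriv]
    refine ⟨fun t => (hd1 t).differentiableAt, by simp, ?_⟩
    rw [hdu, show (1 : WithTop ℕ∞) = 0 + 1 from rfl, contDiff_succ_iff_deriv]
    refine ⟨fun t => (hd2 t).differentiableAt, by simp, ?_⟩
    rw [show deriv (Ex9.vv φ) = Ex9.ww φ from funext fun t => (hd2 t).deriv]
    rw [contDiff_zero]
    exact Ex9.cont_ww hφc
  have hode : ∀ t ∈ Set.Ioo (0:ℝ) 1,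
      HasDerivAt (deriv (deriv u)) (-Real.exp (u t) - Real.exp (deriv u t)) t := by
    intro t ht
    rw [hddu, hdu]
    have h := hd3 t
    have hmem : t ∈ Set.Icc (0:ℝ) 1 := ⟨le_of_lt ht.1, le_of_lt ht.2⟩
    have hval : φ t = -Real.exp (u t) - Real.exp (Ex9.vv φ t) := by
      rw [hφdef]
      show Ex9.Ff f.1 t = _
      simp only [Ex9.Ff]
      rw [Set.projIcc_of_mem zero_le_one hmem, hfeq ⟨t, hmem⟩]
      rw [hudef, hφdef]
      ring
    rwa [hval] at h
  have hbounds : InBounds u := by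
    intro t ht
    have hx := hfeq ⟨t, ht⟩
    have hf2 := f.2 ⟨t, ht⟩
    rw [hx] at hf2
    obtain ⟨h1, h2⟩ := hf2
    refine ⟨?_, ?_, ?_⟩
    · rw [show (0.2250:ℝ) = 9/40 by norm_num]
      exact h1
    · rw [hdu, show (0.3375:ℝ) = 27/80 by norm_num]
      exact h2
    · rw [hddu, show (1.350:ℝ) = 27/20 by norm_num]
      have := Ex9.abs_ww_le hφc hM ht
      linarith
  have hnn : ∀ t ∈ Set.Icc (0:ℝ) 1, 0 ≤ u t := fun t ht => (hbounds t ht).1.1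
  have hmono : MonotoneOn u (Set.Icc (0:ℝ) 1) := by
    apply monotoneOn_of_deriv_nonneg (convex_Icc 0 1) (Ex9.cont_uu hφc).continuousOn
    · rw [interior_Icc]
      exact fun t _ => (hd1 t).differentiableAt.differentiableWithinAt
    · intro t ht
      rw [interior_Icc] at ht
      rw [(hd1 t).deriv]
      exact Ex9.vv_nonneg hφc hneg ⟨le_of_lt ht.1, le_of_lt ht.2⟩
  refine ⟨u, ⟨⟨hcd, hode, Ex9.uu_zero, by rw [hdu]; exact Ex9.vv_zero,
    by rw [hdu]; exact Ex9.vv_one⟩, hbounds, hnn, hmono⟩, ?_⟩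
  rintro v ⟨hvsol, hvbnd⟩
  obtain ⟨hv2, hvode, hv0, hdv0, hdv1⟩ := hvsol
  have hvdiff : Differentiable ℝ v := hv2.differentiable (by norm_num)
  have hdv_cd : ContDiff ℝ 1 (deriv v) := by
    rw [show (2 : WithTop ℕ∞) = 1 + 1 from rfl, contDiff_succ_iff_deriv] at hv2
    exact hv2.2.2
  have hdv_diff : Differentiable ℝ (deriv v) := hdv_cd.differentiable one_ne_zero
  have hddv_cont : Continuous (deriv (deriv v)) := hdv_cd.continuous_deriv le_rfl
  have hgc : Continuous fun x : ↥(Set.Icc (0:ℝ) 1) => ((v ↑x, deriv v ↑x) : ℝ × ℝ) :=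
    ((hvdiff.continuous.comp continuous_subtype_val).prodMk
      (hdv_diff.continuous.comp continuous_subtype_val))
  set gmap : C(Set.Icc (0:ℝ) 1, ℝ × ℝ) := ⟨fun x => (v ↑x, deriv v ↑x), hgc⟩ with hgdef
  have hgmem : gmap ∈ Ex9.SSet := by
    intro x
    obtain ⟨h1, h2, _⟩ := hvbnd x x.2
    constructor
    · show v ↑x ∈ Set.Icc (0:ℝ) (9/40)
      rw [show (9/40:ℝ) = 0.2250 by norm_num]
      exact h1
    · show deriv v ↑x ∈ Set.Icc (0:ℝ) (27/80)
      rw [show (27/80:ℝ) = 0.3375 by norm_num]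
      exact h2
  have hψ_eq : ∀ t ∈ Set.Icc (0:ℝ) 1,
      Ex9.Ff gmap t = -(Real.exp (v t) + Real.exp (deriv v t)) := by
    intro t htt
    simp only [Ex9.Ff]
    rw [Set.projIcc_of_mem zero_le_one htt]
    rfl
  set ψ := Ex9.Ff gmap with hψdef
  have hψc : Continuous ψ := Ex9.cont_Ff gmap
  -- step 1 : ww ψ - v'' is constant on [0,1]
  have hAc : ContinuousOn (fun t => Ex9.ww ψ t - deriv (deriv v) t) (Set.Icc 0 1) :=
    ((Ex9.cont_ww hψc).sub hddv_cont).continuousOn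
  have hAd : ∀ t ∈ Set.Ioo (0:ℝ) 1,
      HasDerivAt (fun t => Ex9.ww ψ t - deriv (deriv v) t) 0 t := by
    intro t htt
    have h1 := Ex9.hasDerivAt_ww hψc t
    have h2 := hvode t htt
    have heq : ψ t = -Real.exp (v t) - Real.exp (deriv v t) := by
      rw [hψ_eq t ⟨le_of_lt htt.1, le_of_lt htt.2⟩]
      ring
    have h3 := h1.sub h2
    refine h3.congr_deriv ?_
    rw [heq]
    ring
  have hAconst := Ex9.constOn hAc hAd
  set κ := Ex9.ww ψ 0 - deriv (deriv v) 0 with hκdef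
  -- step 2 : vv ψ - v' - κ t is constant, and κ = 0
  have hBc : ContinuousOn (fun t => Ex9.vv ψ t - deriv v t - κ * t) (Set.Icc 0 1) :=
    (((Ex9.cont_vv hψc).sub hdv_diff.continuous).sub
      (continuous_const.mul continuous_id)).continuousOn
  have hBd : ∀ t ∈ Set.Ioo (0:ℝ) 1,
      HasDerivAt (fun t => Ex9.vv ψ t - deriv v t - κ * t) 0 t := by
    intro t htt
    have h1 := (Ex9.hasDerivAt_vv hψc t).sub (hdv_diff t).hasDerivAt
    have h2 := (hasDerivAt_id t).const_mul κ
    have h3 := h1.sub h2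
    refine h3.congr_deriv ?_
    have hA := hAconst t ⟨le_of_lt htt.1, le_of_lt htt.2⟩
    rw [mul_one]
    linarith
  have hBconst := Ex9.constOn hBc hBd
  have hB0 : Ex9.vv ψ 0 - deriv v 0 - κ * 0 = 0 := by
    rw [Ex9.vv_zero, hdv0]
    ring
  have hκ0 : κ = 0 := by
    have h1 := hBconst 1 ⟨zero_le_one, le_refl 1⟩
    rw [hB0, Ex9.vv_one, hdv1] at h1
    linarith
  have hveq : ∀ t ∈ Set.Icc (0:ℝ) 1, Ex9.vv ψ t = deriv v t := by
    intro t htt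
    have h1 := hBconst t htt
    rw [hB0, hκ0] at h1
    linarith [h1]
  -- step 3 : uu ψ = v
  have hCc : ContinuousOn (fun t => Ex9.uu ψ t - v t) (Set.Icc 0 1) :=
    ((Ex9.cont_uu hψc).sub hvdiff.continuous).continuousOn
  have hCd : ∀ t ∈ Set.Ioo (0:ℝ) 1,
      HasDerivAt (fun t => Ex9.uu ψ t - v t) 0 t := by
    intro t htt
    have h1 := (Ex9.hasDerivAt_uu hψc t).sub (hvdiff t).hasDerivAt
    refine h1.congr_deriv ?_
    have := hveq t ⟨le_of_lt htt.1, le_of_lt htt.2⟩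
    linarith
  have hCconst := Ex9.constOn hCc hCd
  have hueq : ∀ t ∈ Set.Icc (0:ℝ) 1, Ex9.uu ψ t = v t := by
    intro t htt
    have h1 := hCconst t htt
    rw [Ex9.uu_zero, hv0] at h1
    linarith
  -- gmap is a fixed point
  have hgfix : Ex9.TS ⟨gmap, hgmem⟩ = ⟨gmap, hgmem⟩ := by
    apply Subtype.ext
    apply ContinuousMap.ext
    intro x
    show (Ex9.uu (Ex9.Ff gmap) ↑x, Ex9.vv (Ex9.Ff gmap) ↑x) = gmap x
    have h1 := hueq ↑x x.2
    have h2 := hveq ↑x x.2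
    rw [← hψdef, h1, h2]
    rfl
  have hgf : (⟨gmap, hgmem⟩ : ↥Ex9.SSet) = f := hC.fixedPoint_unique hgfix
  intro t ht
  have hx : gmap ⟨t, ht⟩ = f.1 ⟨t, ht⟩ := by
    rw [← hgf]
  rw [hfeq ⟨t, ht⟩] at hx
  have h1 := congrArg Prod.fst hx
  exact h1
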